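/- Let a_n denote the number of ordered pairs (σ,τ) of permutations of {1,…,n} with no common rise (with a_0 = 1). Then the formal power series identity (∑_{n≥0} a_n x^n/(n!)²) · (∑_{n≥0} (−1)^n x^n/(n!)²) = 1 holds; equivalently, ∑_{k=0}^{n} (−1)^k (C(n,k))² a_{n−k} = 0 for all n ≥ 1. -/

import Mathlib

open Equiv

/-- `noCommonRisePairs n` is the number of ordered pairs `(σ,τ)` of permutations of
`{1,…,n}` with no common rise: there is no index `i` with `σ(i) < σ(i+1)` and
`τ(i) < τ(i+1)`.  (For `n = 0` this is `1`.) -/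
noncomputable def noCommonRisePairs (n : ℕ) : ℕ :=
  Nat.card {p : Perm (Fin n) × Perm (Fin n) //
    ¬ ∃ i j : Fin n, (j : ℕ) = (i : ℕ) + 1 ∧ p.1 i < p.1 j ∧ p.2 i < p.2 j}

namespace NCR

def Rise {N : ℕ} (σ : Perm (Fin N)) (i : ℕ) : Prop :=
  ∃ (h1 : i < N) (h2 : i + 1 < N), σ ⟨i, h1⟩ < σ ⟨i + 1, h2⟩

lemma nc_iff {N : ℕ} (p : Perm (Fin N) × Perm (Fin N)) :
    (¬ ∃ i j : Fin N, (j : ℕ) = (i : ℕ) + 1 ∧ p.1 i < p.1 j ∧ p.2 i < p.2 j) ↔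
    ∀ i : ℕ, ¬ (Rise p.1 i ∧ Rise p.2 i) := by
  constructor
  · rintro h i ⟨⟨h1, h2, l1⟩, ⟨h1', h2', l2⟩⟩
    exact h ⟨⟨i, h1⟩, ⟨i + 1, h2⟩, rfl, l1, l2⟩
  · rintro h ⟨i, j, hij, l1, l2⟩
    refine h i ⟨⟨i.2, hij ▸ j.2, ?_⟩, ⟨i.2, hij ▸ j.2, ?_⟩⟩
    · have : j = ⟨(i : ℕ) + 1, hij ▸ j.2⟩ := Fin.ext hij
      simpa [← this] using l1
    · have : j = ⟨(i : ℕ) + 1, hij ▸ j.2⟩ := Fin.ext hij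
      simpa [← this] using l2

noncomputable def Gc (N m : ℕ) : ℕ :=
  Nat.card {p : Perm (Fin N) × Perm (Fin N) //
    (∀ i < m, Rise p.1 i ∧ Rise p.2 i) ∧ ∀ i, m ≤ i → ¬ (Rise p.1 i ∧ Rise p.2 i)}

noncomputable def Sc (N k : ℕ) : ℕ :=
  Nat.card {p : Perm (Fin N) × Perm (Fin N) //
    (∀ i : ℕ, i + 1 < k → Rise p.1 i ∧ Rise p.2 i) ∧ ∀ i, k ≤ i → ¬ (Rise p.1 i ∧ Rise p.2 i)}

lemma card_split {α : Type*} [Fintype α] (P Q : α → Prop) :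
    Nat.card {x // P x} = Nat.card {x // P x ∧ Q x} + Nat.card {x // P x ∧ ¬ Q x} := by
  classical
  rw [← Nat.card_congr (Equiv.subtypeSubtypeEquivSubtypeInter P Q),
    ← Nat.card_congr (Equiv.subtypeSubtypeEquivSubtypeInter P (fun x => ¬ Q x)),
    ← Nat.card_sum]
  exact Nat.card_congr (Equiv.sumCompl (fun x : {x // P x} => Q x.1)).symm

lemma split (N k : ℕ) (hk : 1 ≤ k) : Sc N k = Gc N k + Gc N (k - 1) := by
  classical
  unfold Sc Gc
  rw [card_split _ (fun p : Perm (Fin N) × Perm (Fin N) => Rise p.1 (k-1) ∧ Rise p.2 (k-1))]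
  congr 1
  · apply Nat.card_congr; apply Equiv.subtypeEquivRight
    intro p
    constructor
    · rintro ⟨⟨hpre, hsuf⟩, hQ⟩
      refine ⟨fun i hi => ?_, hsuf⟩
      rcases Nat.lt_or_ge (i+1) k with h | h
      · exact hpre i h
      · have : i = k - 1 := by omega
        subst this; exact hQ
    · rintro ⟨hpre, hsuf⟩
      exact ⟨⟨fun i hi => hpre i (by omega), hsuf⟩, hpre (k-1) (by omega)⟩
  · apply Nat.card_congr; apply Equiv.subtypeEquivRight
    intro p
    constructor
    · rintro ⟨⟨hpre, hsuf⟩, hQ⟩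
      refine ⟨fun i hi => hpre i (by omega), fun i hi => ?_⟩
      rcases Nat.lt_or_ge i k with h | h
      · have : i = k - 1 := by omega
        subst this; exact hQ
      · exact hsuf i h
    · rintro ⟨hpre, hsuf⟩
      exact ⟨⟨fun i hi => hpre i (by omega), fun i hi => hsuf i (by omega)⟩,
        hsuf (k-1) (by omega)⟩

lemma ncr_eq_G0 (N : ℕ) : noCommonRisePairs N = Gc N 0 := by
  unfold noCommonRisePairs Gc
  apply Nat.card_congr; apply Equiv.subtypeEquivRight
  intro p
  rw [nc_iff]
  constructor
  · intro h; exact ⟨fun i hi => absurd hi (Nat.not_lt_zero i), fun i _ => h i⟩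
  · rintro ⟨_, h⟩ i; exact h i (Nat.zero_le i)

lemma G_top (N : ℕ) (hN : 1 ≤ N) : Gc N N = 0 := by
  unfold Gc
  rw [Nat.card_eq_zero]
  left
  constructor
  rintro ⟨p, hpre, -⟩
  obtain ⟨-, h2, -⟩ := (hpre (N-1) (by omega)).1
  omega


lemma mono_of_adj {N : ℕ} (σ : Perm (Fin N)) (k : ℕ) (h : ∀ i : ℕ, i + 1 < k → Rise σ i) :
    ∀ b, b < k → ∀ (hbN : b < N), ∀ a, a < b → ∀ (haN : a < N),
      σ ⟨a, haN⟩ < σ ⟨b, hbN⟩ := by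
  intro b
  induction b with
  | zero => omega
  | succ c ih =>
    intro hb hbN a hab haN
    obtain ⟨h1, h2, hlt⟩ := h c hb
    rcases Nat.eq_or_lt_of_le (Nat.le_of_lt_succ hab) with heq | h'
    · subst heq; exact hlt
    · exact lt_trans (ih (by omega) (by omega) a h' haN) hlt

variable {k m : ℕ}

abbrev E (k m : ℕ) := {B : Finset (Fin (k + m)) // B.card = m}

lemma compl_card (B : E k m) : (B.1ᶜ).card = k := by
  rw [Finset.card_compl, B.2]; simp

def psifun (B : E k m) (p : Perm (Fin m)) : Fin (k + m) → Fin (k + m) := fun i =>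
  if h : (i : ℕ) < k then (B.1ᶜ).orderEmbOfFin (compl_card B) ⟨i, h⟩
  else B.1.orderEmbOfFin B.2 (p ⟨(i : ℕ) - k, by have := i.isLt; omega⟩)

lemma psifun_lo (B : E k m) (p : Perm (Fin m)) (i : ℕ) (hkm : i < k + m) (h : i < k) :
    psifun B p ⟨i, hkm⟩ = (B.1ᶜ).orderEmbOfFin (compl_card B) ⟨i, h⟩ := dif_pos h

lemma psifun_hi (B : E k m) (p : Perm (Fin m)) (i : ℕ) (hkm : i < k + m) (h : ¬ i < k) :
    psifun B p ⟨i, hkm⟩ = B.1.orderEmbOfFin B.2 (p ⟨i - k, by omega⟩) := dif_neg h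

lemma psifun_inj (B : E k m) (p : Perm (Fin m)) : Function.Injective (psifun B p) := by
  rintro ⟨i, hi⟩ ⟨j, hj⟩ hij
  by_cases h1 : i < k <;> by_cases h2 : j < k
  · rw [psifun_lo B p i hi h1, psifun_lo B p j hj h2] at hij
    have := (Finset.orderEmbOfFin (B.1ᶜ) (compl_card B)).injective hij
    have hv : i = j := congrArg Fin.val this
    exact Fin.ext hv
  · exfalso
    rw [psifun_lo B p i hi h1, psifun_hi B p j hj h2] at hij
    have m1 := Finset.orderEmbOfFin_mem (B.1ᶜ) (compl_card B) ⟨i, h1⟩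
    have m2 := Finset.orderEmbOfFin_mem B.1 B.2 (p ⟨j - k, by omega⟩)
    rw [hij] at m1
    exact (Finset.mem_compl.mp m1) m2
  · exfalso
    rw [psifun_hi B p i hi h1, psifun_lo B p j hj h2] at hij
    have m1 := Finset.orderEmbOfFin_mem (B.1ᶜ) (compl_card B) ⟨j, h2⟩
    have m2 := Finset.orderEmbOfFin_mem B.1 B.2 (p ⟨i - k, by omega⟩)
    rw [← hij] at m1
    exact (Finset.mem_compl.mp m1) m2
  · rw [psifun_hi B p i hi h1, psifun_hi B p j hj h2] at hij
    have := p.injective ((Finset.orderEmbOfFin B.1 B.2).injective hij)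
    have hv : i - k = j - k := congrArg Fin.val this
    exact Fin.ext (show i = j by omega)

noncomputable def psi (B : E k m) (p : Perm (Fin m)) : Perm (Fin (k + m)) :=
  Equiv.ofBijective _ (Finite.injective_iff_bijective.mp (psifun_inj B p))

lemma psi_apply (B : E k m) (p : Perm (Fin m)) (i : Fin (k + m)) :
    psi B p i = psifun B p i := rfl

lemma psi_pre (B : E k m) (p : Perm (Fin m)) : ∀ i : ℕ, i + 1 < k → Rise (psi B p) i := by
  intro i hi
  refine ⟨by omega, by omega, ?_⟩
  rw [psi_apply, psi_apply, psifun_lo B p i (by omega) (by omega),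
    psifun_lo B p (i+1) (by omega) hi]
  exact ((B.1ᶜ).orderEmbOfFin (compl_card B)).strictMono (Fin.mk_lt_mk.mpr (Nat.lt_succ_self i))

lemma psi_rise (B : E k m) (p : Perm (Fin m)) (i : ℕ) (hi : k ≤ i) :
    Rise (psi B p) i ↔ Rise p (i - k) := by
  constructor
  · rintro ⟨h1, h2, hlt⟩
    refine ⟨by omega, by omega, ?_⟩
    rw [psi_apply, psi_apply, psifun_hi B p i h1 (by omega),
      psifun_hi B p (i+1) h2 (by omega)] at hlt
    have hlt' := (Finset.orderEmbOfFin B.1 B.2).lt_iff_lt.mp hlt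
    have he : (⟨i + 1 - k, by omega⟩ : Fin m) = ⟨i - k + 1, by omega⟩ := Fin.ext (show i + 1 - k = i - k + 1 by omega)
    rw [he] at hlt'
    exact hlt'
  · rintro ⟨h1, h2, hlt⟩
    refine ⟨by omega, by omega, ?_⟩
    rw [psi_apply, psi_apply, psifun_hi B p i (by omega) (by omega),
      psifun_hi B p (i+1) (by omega) (by omega)]
    apply (Finset.orderEmbOfFin B.1 B.2).lt_iff_lt.mpr
    have he : (⟨i + 1 - k, by omega⟩ : Fin m) = ⟨i - k + 1, by omega⟩ := Fin.ext (show i + 1 - k = i - k + 1 by omega)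
    rw [he]
    exact hlt

def suff {k m : ℕ} (σ : Perm (Fin (k + m))) : Fin m → Fin (k + m) :=
  fun j => σ ⟨k + j, by have := j.isLt; omega⟩

lemma suff_inj (σ : Perm (Fin (k + m))) : Function.Injective (suff σ) := by
  intro a b hab
  have := σ.injective hab
  have hv : k + (a : ℕ) = k + (b : ℕ) := congrArg Fin.val this
  exact Fin.ext (show (a : ℕ) = b by omega)

lemma psi_suff (B : E k m) (p : Perm (Fin m)) (j : Fin m) :
    suff (psi B p) j = B.1.orderEmbOfFin B.2 (p j) := by
  show psifun B p _ = _
  rw [psifun_hi B p (k + j) (by have := j.isLt; omega) (by omega)]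
  congr 1
  exact congrArg p (Fin.ext (show k + (j : ℕ) - k = j by omega))

lemma suff_image (B : E k m) (p : Perm (Fin m)) :
    Finset.image (suff (psi B p)) Finset.univ = B.1 := by
  apply Finset.eq_of_subset_of_card_le
  · intro x hx
    obtain ⟨j, -, rfl⟩ := Finset.mem_image.mp hx
    rw [psi_suff]
    exact Finset.orderEmbOfFin_mem _ _ _
  · rw [B.2, Finset.card_image_of_injective _ (suff_inj _), Finset.card_univ, Fintype.card_fin]

lemma psi_inj2 : Function.Injective
    (fun Bp : E k m × Perm (Fin m) => psi Bp.1 Bp.2) := by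
  rintro ⟨B, p⟩ ⟨B', p'⟩ h
  simp only at h
  have hB : B = B' := by
    apply Subtype.ext
    rw [← suff_image B p, ← suff_image B' p', h]
  subst hB
  have hp : p = p' := by
    apply Equiv.ext
    intro j
    have h1 := psi_suff B p j
    have h2 := psi_suff B p' j
    rw [h, h2] at h1
    exact (Finset.orderEmbOfFin B.1 B.2).injective h1.symm
  rw [hp]

lemma psi_surj (σ : Perm (Fin (k + m))) (hσ : ∀ i : ℕ, i + 1 < k → Rise σ i) :
    ∃ Bp : E k m × Perm (Fin m), psi Bp.1 Bp.2 = σ := by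
  classical
  have hBcard : (Finset.image (suff σ) Finset.univ).card = m := by
    rw [Finset.card_image_of_injective _ (suff_inj σ), Finset.card_univ, Fintype.card_fin]
  set B : E k m := ⟨Finset.image (suff σ) Finset.univ, hBcard⟩ with hBdef
  have hmemB : ∀ j : Fin m, suff σ j ∈ B.1 := fun j =>
    Finset.mem_image_of_mem _ (Finset.mem_univ j)
  -- pattern
  have hqinj : Function.Injective
      (fun j : Fin m => (B.1.orderIsoOfFin B.2).symm ⟨suff σ j, hmemB j⟩) := by
    intro a b hab
    have := (B.1.orderIsoOfFin B.2).symm.injective hab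
    exact suff_inj σ (congrArg Subtype.val this)
  set p : Perm (Fin m) :=
    Equiv.ofBijective _ (Finite.injective_iff_bijective.mp hqinj) with hpdef
  have hqval : ∀ j, B.1.orderEmbOfFin B.2 (p j) = suff σ j := by
    intro j
    have : (B.1.orderIsoOfFin B.2) (p j) = ⟨suff σ j, hmemB j⟩ := by
      show (B.1.orderIsoOfFin B.2) ((B.1.orderIsoOfFin B.2).symm _) = _
      simp
    have h2 := congrArg Subtype.val this
    rwa [Finset.coe_orderIsoOfFin_apply] at h2
  -- prefix values
  have hpmem : ∀ i : Fin k, σ ⟨i, by have := i.isLt; omega⟩ ∈ B.1ᶜ := by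
    intro i
    rw [Finset.mem_compl]
    intro hmem
    obtain ⟨j, -, hj⟩ := Finset.mem_image.mp hmem
    have := σ.injective hj
    have hv : k + (j : ℕ) = (i : ℕ) := congrArg Fin.val this
    have := i.isLt
    omega
  have hmono : StrictMono (fun i : Fin k => σ ⟨i, by have := i.isLt; omega⟩) := by
    intro a b hab
    exact mono_of_adj σ k hσ b b.isLt (by have := b.isLt; omega) a hab
      (by have := a.isLt; omega)
  have hpref := Finset.orderEmbOfFin_unique (compl_card B) hpmem hmono
  refine ⟨(B, p), ?_⟩
  apply Equiv.ext
  rintro ⟨i, hi⟩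
  by_cases h : i < k
  · rw [psi_apply, psifun_lo B p i hi h, ← congrFun hpref ⟨i, h⟩]
  · rw [psi_apply, psifun_hi B p i hi h, hqval]
    show σ _ = σ _
    exact congrArg σ (Fin.ext (show k + (i - k) = i by omega))


section Count
variable {k m : ℕ}

theorem count (k m : ℕ) :
    Sc (k + m) k = ((k + m).choose m) ^ 2 * noCommonRisePairs m := by
  classical
  -- the domain of the structured data
  let Dom := {q : (E k m × Perm (Fin m)) × (E k m × Perm (Fin m)) //
    ∀ i : ℕ, ¬ (Rise q.1.2 i ∧ Rise q.2.2 i)}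
  let Tgt := {p : Perm (Fin (k + m)) × Perm (Fin (k + m)) //
    (∀ i : ℕ, i + 1 < k → Rise p.1 i ∧ Rise p.2 i) ∧
      ∀ i, k ≤ i → ¬ (Rise p.1 i ∧ Rise p.2 i)}
  have hkk : ∀ i : ℕ, k ≤ k + i := fun i => Nat.le_add_right k i
  let Θ : Dom → Tgt := fun q => ⟨(psi q.1.1.1 q.1.1.2, psi q.1.2.1 q.1.2.2), by
    constructor
    · intro i hi
      exact ⟨psi_pre _ _ i hi, psi_pre _ _ i hi⟩
    · intro i hi hcr
      have r1 := (psi_rise q.1.1.1 q.1.1.2 i hi).mp hcr.1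
      have r2 := (psi_rise q.1.2.1 q.1.2.2 i hi).mp hcr.2
      exact q.2 (i - k) ⟨r1, r2⟩⟩
  have hbij : Function.Bijective Θ := by
    constructor
    · rintro ⟨q, hq⟩ ⟨q', hq'⟩ h
      have h1 : psi q.1.1 q.1.2 = psi q'.1.1 q'.1.2 := congrArg (Prod.fst ∘ Subtype.val) h
      have h2 : psi q.2.1 q.2.2 = psi q'.2.1 q'.2.2 := congrArg (Prod.snd ∘ Subtype.val) h
      have e1 : q.1 = q'.1 := psi_inj2 h1
      have e2 : q.2 = q'.2 := psi_inj2 h2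
      exact Subtype.ext (Prod.ext e1 e2)
    · rintro ⟨⟨σ, τ⟩, hpre, hsuf⟩
      obtain ⟨⟨B1, p1⟩, hs1⟩ := psi_surj σ (fun i h => (hpre i h).1)
      obtain ⟨⟨B2, p2⟩, hs2⟩ := psi_surj τ (fun i h => (hpre i h).2)
      refine ⟨⟨((B1, p1), (B2, p2)), ?_⟩, ?_⟩
      · intro i hri
        have h1 : Rise (psi B1 p1) (k + i) := by
          rw [psi_rise B1 p1 (k + i) (hkk i)]
          have : k + i - k = i := by omega
          rw [this]; exact hri.1
        have h2 : Rise (psi B2 p2) (k + i) := by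
          rw [psi_rise B2 p2 (k + i) (hkk i)]
          have : k + i - k = i := by omega
          rw [this]; exact hri.2
        rw [hs1] at h1; rw [hs2] at h2
        exact hsuf (k + i) (hkk i) ⟨h1, h2⟩
      · apply Subtype.ext
        show (psi B1 p1, psi B2 p2) = (σ, τ)
        rw [hs1, hs2]
  -- regroup Dom
  let reg : Dom ≃ (E k m × E k m) ×
      {pp : Perm (Fin m) × Perm (Fin m) // ∀ i : ℕ, ¬ (Rise pp.1 i ∧ Rise pp.2 i)} :=
    { toFun := fun q => ((q.1.1.1, q.1.2.1), ⟨(q.1.1.2, q.1.2.2), q.2⟩)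
      invFun := fun r => ⟨((r.1.1, r.2.1.1), (r.1.2, r.2.1.2)), r.2.2⟩
      left_inv := fun q => rfl
      right_inv := fun r => rfl }
  have hcard : Sc (k + m) k = Nat.card Dom := by
    unfold Sc
    exact (Nat.card_congr (Equiv.ofBijective Θ hbij)).symm
  rw [hcard, Nat.card_congr reg, Nat.card_prod, Nat.card_prod]
  have hE : Nat.card (E k m) = (k + m).choose m := by
    rw [Nat.card_eq_fintype_card, Fintype.card_finset_len, Fintype.card_fin]
  have hnc : Nat.card {pp : Perm (Fin m) × Perm (Fin m) //
      ∀ i : ℕ, ¬ (Rise pp.1 i ∧ Rise pp.2 i)} = noCommonRisePairs m := by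
    unfold noCommonRisePairs
    exact Nat.card_congr (Equiv.subtypeEquivRight (fun p => (nc_iff p).symm))
  rw [hE, hnc]
  ring

end Count

theorem key (n k : ℕ) (h1 : 1 ≤ k) (hk : k ≤ n) :
    (n.choose k) ^ 2 * noCommonRisePairs (n - k) = Gc n k + Gc n (k - 1) := by
  obtain ⟨m, rfl⟩ : ∃ m, n = k + m := ⟨n - k, by omega⟩
  have hm : k + m - k = m := by omega
  have hc : (k + m).choose k = (k + m).choose m := by
    rw [← Nat.choose_symm hk, hm]
  rw [hm, hc, ← count k m]
  exact split (k + m) k h1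

theorem finsum (n : ℕ) (hn : 1 ≤ n) :
    ∑ k ∈ Finset.range (n + 1),
      ((-1 : ℤ)) ^ k * (n.choose k : ℤ) ^ 2 * (noCommonRisePairs (n - k) : ℤ) = 0 := by
  rw [Finset.sum_range_succ']
  set F : ℕ → ℤ := fun j => (-1 : ℤ) ^ j * (Gc n j : ℤ) with hF
  have hstep : ∀ k ∈ Finset.range n,
      (-1 : ℤ) ^ (k + 1) * (n.choose (k + 1) : ℤ) ^ 2 *
        (noCommonRisePairs (n - (k + 1)) : ℤ) = F (k + 1) - F k := by
    intro k hkr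
    have hkn : k + 1 ≤ n := Nat.succ_le_of_lt (Finset.mem_range.mp hkr)
    have hkey := key n (k + 1) (Nat.le_add_left 1 k) hkn
    have hkey' : ((n.choose (k + 1) : ℤ)) ^ 2 * (noCommonRisePairs (n - (k + 1)) : ℤ) =
        (Gc n (k + 1) : ℤ) + (Gc n k : ℤ) := by
      have := congrArg (fun x : ℕ => (x : ℤ)) hkey
      push_cast at this ⊢
      simpa using this
    rw [hF]
    calc (-1 : ℤ) ^ (k + 1) * (n.choose (k + 1) : ℤ) ^ 2 *
          (noCommonRisePairs (n - (k + 1)) : ℤ)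
        = (-1 : ℤ) ^ (k + 1) * ((Gc n (k + 1) : ℤ) + (Gc n k : ℤ)) := by
          rw [mul_assoc, hkey']
      _ = (-1 : ℤ) ^ (k + 1) * (Gc n (k + 1) : ℤ) - (-1 : ℤ) ^ k * (Gc n k : ℤ) := by
          rw [pow_succ]; ring
  rw [Finset.sum_congr rfl hstep, Finset.sum_range_sub F]
  have h0 : noCommonRisePairs (n - 0) = Gc n 0 := by
    rw [Nat.sub_zero, ncr_eq_G0]
  have htop : Gc n n = 0 := G_top n hn
  rw [hF]
  have h0' : noCommonRisePairs n = Gc n 0 := ncr_eq_G0 n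
  simp [htop, h0']

theorem ncr_zero : noCommonRisePairs 0 = 1 := by
  unfold noCommonRisePairs
  have : ∀ p : Perm (Fin 0) × Perm (Fin 0),
      ¬ ∃ i j : Fin 0, (j : ℕ) = (i : ℕ) + 1 ∧ p.1 i < p.1 j ∧ p.2 i < p.2 j := by
    rintro p ⟨i, -, -⟩
    exact i.elim0
  rw [Nat.card_congr (Equiv.subtypeUnivEquiv this), Nat.card_prod,
    Nat.card_eq_fintype_card]
  simp

end NCR


/-- Let `a n` be the number of ordered pairs of permutations of `{1,…,n}` with no common
rise.  Then `(∑ aₙ xⁿ/(n!)²) · (∑ (−1)ⁿ xⁿ/(n!)²) = 1` as formal power series;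
equivalently, `∑_{k=0}^{n} (−1)^k (C(n,k))² a_{n−k} = 0` for all `n ≥ 1`. -/
theorem noCommonRise_bessel_identity :
    (PowerSeries.mk (fun n => (noCommonRisePairs n : ℚ) / ((n.factorial : ℚ))^2)) *
      (PowerSeries.mk (fun n => ((-1 : ℚ))^n / ((n.factorial : ℚ))^2)) = 1 ∧
    ∀ n : ℕ, 1 ≤ n →
      ∑ k ∈ Finset.range (n + 1),
        ((-1 : ℤ))^k * (n.choose k : ℤ)^2 * (noCommonRisePairs (n - k) : ℤ) = 0 := by
  constructor
  · ext n
    rw [PowerSeries.coeff_mul]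
    simp only [PowerSeries.coeff_mk]
    rcases Nat.eq_zero_or_pos n with rfl | hn
    · simp [NCR.ncr_zero]
    · rw [Finset.Nat.sum_antidiagonal_eq_sum_range_succ
        (fun a b => (noCommonRisePairs a : ℚ) / ((a.factorial : ℚ))^2 *
          (((-1 : ℚ))^b / ((b.factorial : ℚ))^2)) n]
      set g : ℕ → ℚ := fun a => (noCommonRisePairs a : ℚ) / ((a.factorial : ℚ))^2 *
          (((-1 : ℚ))^(n - a) / (((n - a).factorial : ℚ))^2) with hg
      have hrefl := Finset.sum_range_reflect g (n + 1)
      have hterm : ∀ j ∈ Finset.range (n + 1),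
          g (n + 1 - 1 - j) =
          (((-1 : ℚ))^j * ((n.choose j : ℚ))^2 * ((noCommonRisePairs (n - j) : ℚ))) *
            (1 / ((n.factorial : ℚ))^2) := by
        intro j hj
        have hjn : j ≤ n := Nat.lt_succ_iff.mp (Finset.mem_range.mp hj)
        have e1 : n + 1 - 1 - j = n - j := by omega
        have e2 : n - (n - j) = j := by omega
        rw [hg]
        simp only [e1, e2]
        have hC : (n.choose j) * j.factorial * (n - j).factorial = n.factorial :=
          Nat.choose_mul_factorial_mul_factorial hjn
        have hf1 : ((j.factorial : ℚ)) ≠ 0 := Nat.cast_ne_zero.mpr (Nat.factorial_ne_zero j)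
        have hf2 : (((n - j).factorial : ℚ)) ≠ 0 :=
          Nat.cast_ne_zero.mpr (Nat.factorial_ne_zero (n - j))
        have hf3 : ((n.factorial : ℚ)) ≠ 0 := Nat.cast_ne_zero.mpr (Nat.factorial_ne_zero n)
        have hCq : ((n.choose j : ℚ)) =
            (n.factorial : ℚ) / ((j.factorial : ℚ) * ((n - j).factorial : ℚ)) := by
          rw [eq_div_iff (mul_ne_zero hf1 hf2)]
          push_cast [← hC]
          ring
        rw [hCq]
        field_simp
      have hz : (∑ j ∈ Finset.range (n + 1),
          ((-1 : ℚ))^j * ((n.choose j : ℚ))^2 * ((noCommonRisePairs (n - j) : ℚ))) = 0 := by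
        exact_mod_cast NCR.finsum n hn
      calc ∑ j ∈ Finset.range (n + 1), g j
          = ∑ j ∈ Finset.range (n + 1), g (n + 1 - 1 - j) := hrefl.symm
        _ = ∑ j ∈ Finset.range (n + 1),
            (((-1 : ℚ))^j * ((n.choose j : ℚ))^2 * ((noCommonRisePairs (n - j) : ℚ))) *
              (1 / ((n.factorial : ℚ))^2) := Finset.sum_congr rfl hterm
        _ = (∑ j ∈ Finset.range (n + 1),
            ((-1 : ℚ))^j * ((n.choose j : ℚ))^2 * ((noCommonRisePairs (n - j) : ℚ))) *
              (1 / ((n.factorial : ℚ))^2) := (Finset.sum_mul _ _ _).symm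
        _ = 0 := by rw [hz, zero_mul]
        _ = (PowerSeries.coeff n) (1 : PowerSeries ℚ) := by
            rw [PowerSeries.coeff_one, if_neg (by omega)]
  · exact NCR.finsum
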